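/- The map h : ℝ≥0 → H_w, x ↦ h_x (where h_x(y) = 1 + ∫₀^{min(x,y)} 1/w(s) ds) is 1/2-Hölder continuous with constant 1: ‖h_y − h_x‖_w ≤ √(y−x) for 0 ≤ x ≤ y. Moreover the lower bound ‖h_y − h_x‖_w ≥ √((y−x)/w(y)) holds. -/

import Mathlib

open MeasureTheory Set Filter

noncomputable section

/-- Inner product on the Filipović space `H_w`, for functions `g, h` with chosen
(weak) derivatives `g', h'`:  `⟨g,h⟩_w = g(0)h(0) + ∫₀^∞ w g' h'`. -/
def wInner (w g g' h h' : ℝ → ℝ) : ℝ :=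
  g 0 * h 0 + ∫ x in Ioi (0:ℝ), w x * g' x * h' x

/-- Norm on the Filipović space `H_w`. -/
def wNorm (w g g' : ℝ → ℝ) : ℝ := Real.sqrt (wInner w g g' g g')

/-- `w : ℝ≥0 → [1,∞)` continuous, increasing, with `w 0 = 1`. -/
structure IsWeight (w : ℝ → ℝ) : Prop where
  cont : ContinuousOn w (Ici 0)
  mono : MonotoneOn w (Ici 0)
  one_le : ∀ x ∈ Ici (0:ℝ), 1 ≤ w x
  at_zero : w 0 = 1

/-- `g ∈ H_w` with derivative `g'`: `g` is absolutely continuous on `[0,∞)` with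
a.e. derivative `g'`, and `∫₀^∞ w (g')² < ∞`. -/
def MemHw (w g g' : ℝ → ℝ) : Prop :=
  (∀ x ∈ Ici (0:ℝ), g x = g 0 + ∫ t in Ioc (0:ℝ) x, g' t) ∧
  (∀ x ∈ Ici (0:ℝ), IntegrableOn g' (Ioc 0 x)) ∧
  IntegrableOn (fun x => w x * g' x ^ 2) (Ioi 0)

/-- The reproducing kernel `h_x(y) = 1 + ∫₀^{min(x,y)} 1/w(s) ds`. -/
def hker (w : ℝ → ℝ) (x y : ℝ) : ℝ := 1 + ∫ s in Ioc (0:ℝ) (min x y), 1 / w s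

/-- Derivative of `h_x`. -/
def hker' (w : ℝ → ℝ) (x : ℝ) : ℝ → ℝ := (Iic x).indicator (fun s => 1 / w s)

/-- the kernel map `x ↦ h_x` is 1/2-Hölder with constant 1,
and `‖h_y − h_x‖_w ≥ √((y−x)/w(y))` for `0 ≤ x ≤ y`. -/
theorem stmt3 (w : ℝ → ℝ) (hw : IsWeight w) (x y : ℝ) (hx : 0 ≤ x) (hxy : x ≤ y) :
    wNorm w (fun z => hker w y z - hker w x z) (fun z => hker' w y z - hker' w x z)
      ≤ Real.sqrt (y - x) ∧
    Real.sqrt ((y - x) / w y) ≤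
      wNorm w (fun z => hker w y z - hker w x z) (fun z => hker' w y z - hker' w x z) := by

  have hy : (0:ℝ) ≤ y := hx.trans hxy
  have hyx : (0:ℝ) ≤ y - x := by linarith
  have hwpos : ∀ z ∈ Ici (0:ℝ), (0:ℝ) < w z := fun z hz =>
    lt_of_lt_of_le one_pos (hw.one_le z hz)
  have hwy : (0:ℝ) < w y := hwpos y hy
  set f : ℝ → ℝ := fun s => 1 / w s with hf
  -- the derivative difference is the indicator of `Ioc x y`
  have hder : (fun z => hker' w y z - hker' w x z) = (Ioc x y).indicator f := by
    funext z
    simp only [hker']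
    by_cases h1 : z ≤ x
    · have h2 : z ≤ y := h1.trans hxy
      simp [indicator_of_mem, mem_Iic.mpr h1, mem_Iic.mpr h2, indicator,
        not_lt.mpr h1]
    · by_cases h2 : z ≤ y
      · simp [indicator, h1, h2, not_lt.mpr h2, lt_of_not_ge h1, hf]
      · simp [indicator, h1, h2, mem_Ioc]
  -- value at 0 is 0
  have h0 : hker w y 0 - hker w x 0 = 0 := by
    simp [hker, min_eq_right hy, min_eq_right hx]
  -- continuity / integrability of f on Icc x y
  have hsub : Icc x y ⊆ Ici (0:ℝ) := fun z hz => hx.trans hz.1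
  have hfc : ContinuousOn f (Icc x y) :=
    continuousOn_const.div (hw.cont.mono hsub) (fun z hz => (hwpos z (hsub hz)).ne')
  have hfi : IntegrableOn f (Ioc x y) :=
    (hfc.integrableOn_Icc).mono_set Ioc_subset_Icc_self
  -- the integrand equals the indicator of Ioc x y of f
  have hint : ∀ z, w z * ((Ioc x y).indicator f z) * ((Ioc x y).indicator f z)
      = (Ioc x y).indicator f z := by
    intro z
    by_cases hz : z ∈ Ioc x y
    · have hwz : (0:ℝ) < w z := hwpos z (le_of_lt (hx.trans_lt hz.1))
      simp only [indicator_of_mem hz, hf]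
      field_simp
    · simp [indicator_of_notMem hz]
  -- compute the inner product
  have hIoc : Ioi (0:ℝ) ∩ Ioc x y = Ioc x y := by
    apply inter_eq_right.mpr
    intro z hz
    exact hx.trans_lt hz.1
  have hinner : wInner w (fun z => hker w y z - hker w x z)
      (fun z => hker' w y z - hker' w x z)
      (fun z => hker w y z - hker w x z)
      (fun z => hker' w y z - hker' w x z) = ∫ z in Ioc x y, f z := by
    have hder' : ∀ z, hker' w y z - hker' w x z = (Ioc x y).indicator f z :=
      fun z => congrFun hder z
    rw [wInner, h0]
    simp only [hder', zero_mul, zero_add]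
    rw [show (fun z => w z * ((Ioc x y).indicator f z) * ((Ioc x y).indicator f z))
        = (Ioc x y).indicator f from funext hint]
    rw [setIntegral_indicator measurableSet_Ioc, hIoc]
  -- bounds on the integral
  have hItoReal : (volume (Ioc x y)).toReal = y - x := by
    rw [Real.volume_Ioc, ENNReal.toReal_ofReal hyx]
  have hupper : (∫ z in Ioc x y, f z) ≤ y - x := by
    have : (∫ z in Ioc x y, f z) ≤ ∫ _z in Ioc x y, (1:ℝ) := by
      apply setIntegral_mono_on hfi ((integrableOn_const_iff).mpr (Or.inr (by
        rw [Real.volume_Ioc]; exact ENNReal.ofReal_lt_top))) measurableSet_Ioc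
      intro z hz
      have hwz : (1:ℝ) ≤ w z := hw.one_le z (le_of_lt (hx.trans_lt hz.1))
      simp only [hf]
      rw [div_le_one (lt_of_lt_of_le one_pos hwz)]
      exact hwz
    simpa [ENNReal.toReal_ofReal hyx, max_eq_left hyx] using this
  have hlower : (y - x) / w y ≤ ∫ z in Ioc x y, f z := by
    have : (∫ _z in Ioc x y, (1 / w y : ℝ)) ≤ ∫ z in Ioc x y, f z := by
      apply setIntegral_mono_on ((integrableOn_const_iff).mpr (Or.inr (by
        rw [Real.volume_Ioc]; exact ENNReal.ofReal_lt_top))) hfi measurableSet_Ioc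
      intro z hz
      have hz0 : (0:ℝ) ≤ z := le_of_lt (hx.trans_lt hz.1)
      have hwz : (0:ℝ) < w z := hwpos z hz0
      have hle : w z ≤ w y := hw.mono hz0 hy hz.2
      exact one_div_le_one_div_of_le hwz hle
    calc (y - x) / w y = (volume (Ioc x y)).toReal * (1 / w y) := by
          rw [hItoReal]; ring
      _ ≤ ∫ z in Ioc x y, f z := by
          simpa [setIntegral_const, smul_eq_mul, ENNReal.toReal_ofReal hyx, max_eq_left hyx] using this
  -- conclude
  rw [wNorm, hinner]
  exact ⟨Real.sqrt_le_sqrt hupper, Real.sqrt_le_sqrt hlower⟩
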